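/- arXiv:1802.04658 — 7 statements merged into one kernel-verified Lean document; each statement's English description precedes it below -/
import Mathlib

section
/- Let ε > 0, p > 0, q > 0 and α, β ∈ ℝ. Define y : [0,1] → ℝ by y(x) = (ε/p) · ln( ((e^{αp/ε} − e^{βp/ε}) e^{−qx/ε} + e^{βp/ε} − e^{(αp−q)/ε}) / (1 − e^{−q/ε}) ). Then the argument of the logarithm is positive for all x ∈ [0,1], y satisfies ε y''(x) + p (y'(x))² + q y'(x) = 0 for all x ∈ (0,1), and y(0) = α, y(1) = β. -/
/-- the exact solution of the hypersingular boundary-value problem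
ε y'' + p (y')² + q y' = 0, y(0) = α, y(1) = β. -/
theorem stmt_1 (ε p q α β : ℝ) (hε : 0 < ε) (hp : 0 < p) (hq : 0 < q)
    (y : ℝ → ℝ)
    (hy : ∀ x : ℝ, y x = ε / p * Real.log
      (((Real.exp (α * p / ε) - Real.exp (β * p / ε)) * Real.exp (-q * x / ε)
        + Real.exp (β * p / ε) - Real.exp ((α * p - q) / ε)) / (1 - Real.exp (-q / ε)))) :
    (∀ x ∈ Set.Icc (0 : ℝ) 1,
      0 < ((Real.exp (α * p / ε) - Real.exp (β * p / ε)) * Real.exp (-q * x / ε)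
        + Real.exp (β * p / ε) - Real.exp ((α * p - q) / ε)) / (1 - Real.exp (-q / ε))) ∧
    (∀ x ∈ Set.Ioo (0 : ℝ) 1,
      ε * deriv (deriv y) x + p * (deriv y x) ^ 2 + q * deriv y x = 0) ∧
    y 0 = α ∧ y 1 = β := by
  have hεne : ε ≠ 0 := ne_of_gt hε
  have hpne : p ≠ 0 := ne_of_gt hp
  set A := Real.exp (α * p / ε) with hAdef
  set B := Real.exp (β * p / ε) with hBdef
  have hA : 0 < A := Real.exp_pos _
  have hB : 0 < B := Real.exp_pos _
  set r := Real.exp (-q / ε) with hrdef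
  have hr0 : 0 < r := Real.exp_pos _
  have hr1 : r < 1 := by
    rw [hrdef]
    apply Real.exp_lt_one_iff.mpr
    have : 0 < q / ε := div_pos hq hε
    rw [neg_div]
    linarith
  set D := 1 - r with hDdef
  have hD : 0 < D := by rw [hDdef]; linarith
  have hDne : D ≠ 0 := ne_of_gt hD
  set k := q / ε with hkdef
  have hk : 0 < k := div_pos hq hε
  set c := A - B with hcdef
  set m := B - A * r with hmdef
  set N : ℝ → ℝ := fun x => c * Real.exp (-k * x) + m with hNdef
  have hexp1 : ∀ x : ℝ, Real.exp (-q * x / ε) = Real.exp (-k * x) := by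
    intro x; congr 1; rw [hkdef]; ring
  have hexp2 : Real.exp ((α * p - q) / ε) = A * r := by
    rw [hAdef, hrdef, ← Real.exp_add]; congr 1; ring
  have key : ∀ x : ℝ, (A - B) * Real.exp (-q * x / ε) + B - Real.exp ((α * p - q) / ε)
      = N x := by
    intro x
    rw [hexp1 x, hexp2]
    simp only [hNdef, hcdef, hmdef]
    ring
  have hNpos : ∀ x ∈ Set.Icc (0 : ℝ) 1, 0 < N x := by
    intro x hx
    have h1 : r ≤ Real.exp (-k * x) := by
      rw [hrdef]
      apply Real.exp_le_exp.mpr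
      rw [hkdef]
      have := hx.2
      rw [neg_div]
      nlinarith [div_pos hq hε]
    have h2 : Real.exp (-k * x) ≤ 1 := by
      apply Real.exp_le_one_iff.mpr
      nlinarith [hx.1]
    have hNx : N x = A * (Real.exp (-k * x) - r) + B * (1 - Real.exp (-k * x)) := by
      simp only [hNdef, hcdef, hmdef]; ring
    rw [hNx]
    rcases eq_or_lt_of_le h2 with he | he
    · nlinarith
    · nlinarith
  have hNderiv : ∀ x : ℝ, HasDerivAt N (c * (Real.exp (-k * x) * -k)) x := by
    intro x
    have h1 : HasDerivAt (fun x : ℝ => -k * x) (-k) x := by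
      simpa using (hasDerivAt_id x).const_mul (-k)
    exact (h1.exp.const_mul c).add_const m
  have hyN : ∀ x : ℝ, y x = ε / p * Real.log (N x / D) := by
    intro x; rw [hy x, key x]
  -- y equals f on Icc
  have hyf : ∀ x ∈ Set.Icc (0 : ℝ) 1,
      y x = ε / p * (Real.log (N x) - Real.log D) := by
    intro x hx
    rw [hyN x, Real.log_div (ne_of_gt (hNpos x hx)) hDne]
  have hf : ∀ x : ℝ, N x ≠ 0 →
      HasDerivAt (fun t => ε / p * (Real.log (N t) - Real.log D))
        (ε / p * (c * (Real.exp (-k * x) * -k) / N x)) x := by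
    intro x hx
    exact (((hNderiv x).log hx).sub_const (Real.log D)).const_mul (ε / p)
  have hmem : ∀ x ∈ Set.Ioo (0 : ℝ) 1, Set.Ioo (0 : ℝ) 1 ∈ nhds x := by
    intro x hx; exact isOpen_Ioo.mem_nhds hx
  have hd1 : ∀ x ∈ Set.Ioo (0 : ℝ) 1,
      deriv y x = ε / p * (c * (Real.exp (-k * x) * -k) / N x) := by
    intro x hx
    have hev : y =ᶠ[nhds x] fun t => ε / p * (Real.log (N t) - Real.log D) :=
      Filter.eventuallyEq_of_mem (hmem x hx)
        (fun t ht => hyf t (Set.Ioo_subset_Icc_self ht))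
    rw [hev.deriv_eq]
    exact (hf x (ne_of_gt (hNpos x (Set.Ioo_subset_Icc_self hx)))).deriv
  have hg : ∀ x : ℝ, N x ≠ 0 →
      HasDerivAt (fun t => ε / p * (c * (Real.exp (-k * t) * -k) / N t))
        (ε / p * ((c * ((Real.exp (-k * x) * -k) * -k) * N x
          - c * (Real.exp (-k * x) * -k) * (c * (Real.exp (-k * x) * -k))) / N x ^ 2)) x := by
    intro x hx
    have h1 : HasDerivAt (fun x : ℝ => -k * x) (-k) x := by
      simpa using (hasDerivAt_id x).const_mul (-k)
    have hu : HasDerivAt (fun t => c * (Real.exp (-k * t) * -k))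
        (c * ((Real.exp (-k * x) * -k) * -k)) x :=
      (h1.exp.mul_const (-k)).const_mul c
    exact (hu.div (hNderiv x) hx).const_mul (ε / p)
  refine ⟨?_, ?_, ?_, ?_⟩
  · intro x hx
    rw [key x]
    exact div_pos (hNpos x hx) hD
  · intro x hx
    have hNx : N x ≠ 0 := ne_of_gt (hNpos x (Set.Ioo_subset_Icc_self hx))
    have hd2 : deriv (deriv y) x
        = ε / p * ((c * ((Real.exp (-k * x) * -k) * -k) * N x
          - c * (Real.exp (-k * x) * -k) * (c * (Real.exp (-k * x) * -k))) / N x ^ 2) := by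
      have hev : deriv y =ᶠ[nhds x] fun t => ε / p * (c * (Real.exp (-k * t) * -k) / N t) :=
        Filter.eventuallyEq_of_mem (hmem x hx) (fun t ht => hd1 t ht)
      rw [hev.deriv_eq]
      exact (hg x hNx).deriv
    rw [hd2, hd1 x hx, hkdef]
    have hNx' : N x ≠ 0 := hNx
    field_simp
    ring
  · have hN0 : N 0 = A * D := by
      simp only [hNdef, hcdef, hmdef, hDdef, mul_zero, Real.exp_zero]
      ring
    rw [hyN 0, hN0, mul_div_assoc, div_self hDne, mul_one, hAdef, Real.log_exp]
    field_simp
  · have hN1 : N 1 = B * D := by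
      have : Real.exp (-k * 1) = r := by
        rw [hrdef, hkdef]; congr 1; ring
      simp only [hNdef, hcdef, hmdef, hDdef, this]
      ring
    rw [hyN 1, hN1, mul_div_assoc, div_self hDne, mul_one, hBdef, Real.log_exp]
    field_simp
end

section
/- Let ε > 0, p > 0, q > 0 and α, β ∈ ℝ, and let y : [0,1] → ℝ be defined by y(x) = (ε/p) · ln( ((e^{αp/ε} − e^{βp/ε}) e^{−qx/ε} + e^{βp/ε} − e^{(αp−q)/ε}) / (1 − e^{−q/ε}) ). Then the one-sided derivatives at the endpoints are y'(0) = (q/p) · (e^{(β−α)p/ε} − 1) / (1 − e^{−q/ε}) and y'(1) = (q/p) · (1 − e^{(α−β)p/ε}) / (e^{q/ε} − 1). -/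
/-- one-sided derivatives at the endpoints of the exact solution of the
hypersingular boundary-value problem ε y'' + p (y')² + q y' = 0, y(0) = α, y(1) = β. -/
theorem stmt_2 (ε p q α β : ℝ) (hε : 0 < ε) (hp : 0 < p) (hq : 0 < q)
    (y : ℝ → ℝ)
    (hy : ∀ x : ℝ, y x = ε / p * Real.log
      (((Real.exp (α * p / ε) - Real.exp (β * p / ε)) * Real.exp (-q * x / ε)
        + Real.exp (β * p / ε) - Real.exp ((α * p - q) / ε)) / (1 - Real.exp (-q / ε)))) :
    derivWithin y (Set.Icc (0 : ℝ) 1) 0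
      = q / p * (Real.exp ((β - α) * p / ε) - 1) / (1 - Real.exp (-q / ε)) ∧
    derivWithin y (Set.Icc (0 : ℝ) 1) 1
      = q / p * (1 - Real.exp ((α - β) * p / ε)) / (Real.exp (q / ε) - 1) := by
  have hεne : ε ≠ 0 := hε.ne'
  have hpne : p ≠ 0 := hp.ne'
  set a := Real.exp (α * p / ε) with hadef
  set b := Real.exp (β * p / ε) with hbdef
  set e := Real.exp (-q / ε) with hedef
  have ha : 0 < a := Real.exp_pos _
  have hb : 0 < b := Real.exp_pos _
  have he0 : 0 < e := Real.exp_pos _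
  have he1 : e < 1 := by
    rw [hedef]
    exact Real.exp_lt_one_iff.mpr (by rw [neg_div]; linarith [div_pos hq hε])
  have hD : 0 < 1 - e := by linarith
  have hC : Real.exp ((α * p - q) / ε) = a * e := by
    rw [hadef, hedef, ← Real.exp_add]
    ring_nf
  have hyf : y = fun x => ε / p * Real.log
      (((a - b) * Real.exp (-q * x / ε) + b - a * e) / (1 - e)) := by
    funext x
    rw [hy x, hC]
  have key : ∀ x0 : ℝ, ((a - b) * Real.exp (-q * x0 / ε) + b - a * e) ≠ 0 →
      HasDerivAt y (ε / p * ((((a - b) * (Real.exp (-q * x0 / ε) * (-q / ε))) / (1 - e)) /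
        (((a - b) * Real.exp (-q * x0 / ε) + b - a * e) / (1 - e)))) x0 := by
    intro x0 hne
    rw [hyf]
    have h1 : HasDerivAt (fun x : ℝ => -q * x / ε) (-q / ε) x0 := by
      simpa using ((hasDerivAt_id x0).const_mul (-q)).div_const ε
    have h2 := h1.exp
    have h3 := ((h2.const_mul (a - b)).add_const (b - a * e)).div_const (1 - e)
    have hne' : ((a - b) * Real.exp (-q * x0 / ε) + b - a * e) / (1 - e) ≠ 0 := by
      exact div_ne_zero hne hD.ne'
    have h4 := (h3.log (by
      convert hne' using 2
      ring))
    have := h4.const_mul (ε / p)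
    simp only [add_sub_assoc]
    exact this
  constructor
  · have hN0 : (a - b) * Real.exp (-q * 0 / ε) + b - a * e = a * (1 - e) := by
      rw [show -q * 0 / ε = 0 by ring, Real.exp_zero]; ring
    have hne0 : (a - b) * Real.exp (-q * 0 / ε) + b - a * e ≠ 0 := by
      rw [hN0]; positivity
    have H := (key 0 hne0).hasDerivWithinAt (s := Set.Icc (0:ℝ) 1)
    rw [H.derivWithin ((uniqueDiffOn_Icc (by norm_num : (0:ℝ) < 1)) 0 (by simp))]
    have hba : Real.exp ((β - α) * p / ε) = b / a := by
      rw [hbdef, hadef, ← Real.exp_sub]; ring_nf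
    rw [hba, hN0]
    have : Real.exp (-q * 0 / ε) = 1 := by simp
    rw [this]
    field_simp
    ring
  · have hE1 : Real.exp (-q * 1 / ε) = e := by rw [hedef]; ring_nf
    have hN1 : (a - b) * Real.exp (-q * 1 / ε) + b - a * e = b * (1 - e) := by
      rw [hE1]; ring
    have hne1 : (a - b) * Real.exp (-q * 1 / ε) + b - a * e ≠ 0 := by
      rw [hN1]; positivity
    have H := (key 1 hne1).hasDerivWithinAt (s := Set.Icc (0:ℝ) 1)
    rw [H.derivWithin ((uniqueDiffOn_Icc (by norm_num : (0:ℝ) < 1)) 1 (by simp))]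
    have hab : Real.exp ((α - β) * p / ε) = a / b := by
      rw [hadef, hbdef, ← Real.exp_sub]; ring_nf
    have hqe : Real.exp (q / ε) = e⁻¹ := by
      rw [hedef, ← Real.exp_neg]; ring_nf
    rw [hab, hqe, hN1, hE1]
    have hden : e⁻¹ - 1 ≠ 0 := by
      have : 1 < e⁻¹ := (one_lt_inv_iff₀).mpr ⟨he0, he1⟩
      linarith
    field_simp
    ring
end

section
/- Let p > 0, q > 0 and α, β ∈ ℝ with β > α, and for ε > 0 set D(ε) = (q/p) · (e^{(β−α)p/ε} − 1) / (1 − e^{−q/ε}) (the derivative at the left boundary of the exact solution of the hypersingular problem). Then ε · ln(D(ε)) tends to (β − α)p as ε → 0⁺; in particular D(ε) grows like e^{(β−α)p/ε}, i.e. the boundary layer at x = 0 is hypersingular. -/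
open Filter

private lemma helper_lim (a : ℝ) (ha : 0 < a) :
    Tendsto (fun ε : ℝ => ε * Real.log (1 - Real.exp (-a / ε)))
      (nhdsWithin 0 (Set.Ioi 0)) (nhds 0) := by
  have h0 : Tendsto (fun ε : ℝ => ε) (nhdsWithin 0 (Set.Ioi 0)) (nhds 0) :=
    tendsto_id.mono_left nhdsWithin_le_nhds
  have hbot : Tendsto (fun ε : ℝ => -a / ε) (nhdsWithin 0 (Set.Ioi 0)) atBot := by
    have htop : Tendsto (fun ε : ℝ => a / ε) (nhdsWithin 0 (Set.Ioi 0)) atTop := by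
      have := tendsto_inv_nhdsGT_zero.const_mul_atTop ha
      simpa [div_eq_mul_inv] using this
    have := tendsto_neg_atTop_atBot.comp htop
    refine this.congr' (Filter.Eventually.of_forall fun x => ?_)
    simp [Function.comp, neg_div]
  have hexp : Tendsto (fun ε : ℝ => Real.exp (-a / ε)) (nhdsWithin 0 (Set.Ioi 0)) (nhds 0) :=
    Real.tendsto_exp_atBot.comp hbot
  have hlog : Tendsto (fun ε : ℝ => Real.log (1 - Real.exp (-a / ε)))
      (nhdsWithin 0 (Set.Ioi 0)) (nhds 0) := by
    have h1 : Tendsto (fun ε : ℝ => 1 - Real.exp (-a / ε)) (nhdsWithin 0 (Set.Ioi 0)) (nhds 1) := by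
      simpa using (tendsto_const_nhds (x := (1:ℝ))).sub hexp
    have := (Real.continuousAt_log (by norm_num : (1:ℝ) ≠ 0)).tendsto.comp h1
    simpa [Function.comp_def] using this
  simpa using h0.mul hlog

/-- for β > α the left-boundary derivative
D(ε) = (q/p)(e^{(β−α)p/ε} − 1)/(1 − e^{−q/ε}) of the exact solution satisfies
ε · ln D(ε) → (β − α)p as ε → 0⁺, i.e. the boundary layer at x = 0 is hypersingular. -/
theorem stmt_4 (p q α β : ℝ) (hp : 0 < p) (hq : 0 < q) (hβα : α < β) :
    Tendsto (fun ε : ℝ => ε * Real.log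
        (q / p * (Real.exp ((β - α) * p / ε) - 1) / (1 - Real.exp (-q / ε))))
      (nhdsWithin 0 (Set.Ioi 0)) (nhds ((β - α) * p)) := by
  set c := (β - α) * p with hc
  have hcpos : 0 < c := mul_pos (sub_pos.2 hβα) hp
  have key : ∀ ε ∈ Set.Ioi (0:ℝ),
      ε * Real.log (q / p) + (c + ε * Real.log (1 - Real.exp (-c / ε)))
        - ε * Real.log (1 - Real.exp (-q / ε))
      = ε * Real.log (q / p * (Real.exp ((β - α) * p / ε) - 1) / (1 - Real.exp (-q / ε))) := by
    intro ε hε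
    have hε0 : (0:ℝ) < ε := hε
    have hqp : (0:ℝ) < q / p := div_pos hq hp
    have hA : (0:ℝ) < Real.exp (c / ε) - 1 := by
      have : (1:ℝ) < Real.exp (c / ε) := by
        rw [show (1:ℝ) = Real.exp 0 from (Real.exp_zero).symm]
        exact Real.exp_lt_exp.2 (div_pos hcpos hε0)
      linarith
    have hB : (0:ℝ) < 1 - Real.exp (-q / ε) := by
      have : Real.exp (-q / ε) < 1 := by
        rw [show (1:ℝ) = Real.exp 0 from (Real.exp_zero).symm]
        exact Real.exp_lt_exp.2 (by
          have : (0:ℝ) < q / ε := div_pos hq hε0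
          simpa [neg_div] using neg_neg_iff_pos.2 this)
      linarith
    have hC : (0:ℝ) < 1 - Real.exp (-c / ε) := by
      have : Real.exp (-c / ε) < 1 := by
        rw [show (1:ℝ) = Real.exp 0 from (Real.exp_zero).symm]
        exact Real.exp_lt_exp.2 (by
          have : (0:ℝ) < c / ε := div_pos hcpos hε0
          simpa [neg_div] using neg_neg_iff_pos.2 this)
      linarith
    have hAeq : Real.exp (c / ε) - 1 = Real.exp (c / ε) * (1 - Real.exp (-c / ε)) := by
      rw [mul_sub, mul_one, ← Real.exp_add, show c / ε + -c / ε = 0 by ring,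
        Real.exp_zero]
    have hlogA : Real.log (Real.exp (c / ε) - 1)
        = c / ε + Real.log (1 - Real.exp (-c / ε)) := by
      rw [hAeq, Real.log_mul (Real.exp_ne_zero _) (ne_of_gt hC), Real.log_exp]
    rw [← hc]
    rw [Real.log_div (by positivity) (ne_of_gt hB),
        Real.log_mul (ne_of_gt hqp) (ne_of_gt hA), hlogA]
    field_simp
  have hεlog : Tendsto (fun ε : ℝ => ε * Real.log (q / p)) (nhdsWithin 0 (Set.Ioi 0)) (nhds 0) := by
    have h0 : Tendsto (fun ε : ℝ => ε) (nhdsWithin 0 (Set.Ioi 0)) (nhds 0) :=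
      tendsto_id.mono_left nhdsWithin_le_nhds
    simpa using h0.mul_const (Real.log (q / p))
  have hmain : Tendsto (fun ε : ℝ =>
      ε * Real.log (q / p) + (c + ε * Real.log (1 - Real.exp (-c / ε)))
        - ε * Real.log (1 - Real.exp (-q / ε)))
      (nhdsWithin 0 (Set.Ioi 0)) (nhds c) := by
    have := (hεlog.add ((tendsto_const_nhds (x := c)).add (helper_lim c hcpos))).sub (helper_lim q hq)
    simpa using this
  exact hmain.congr' (Filter.eventuallyEq_of_mem self_mem_nhdsWithin key)
end

section
/- Let p > 0, q > 0 and α, β ∈ ℝ with β < α, and for ε > 0 set D(ε) = (q/p) · (e^{(β−α)p/ε} − 1) / (1 − e^{−q/ε}) (the derivative at the left boundary of the exact solution of the hypersingular problem). Then D(ε) tends to −q/p as ε → 0⁺, i.e. the left-boundary derivative stays bounded and there is no boundary layer at x = 0. -/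
open Filter

/-- for β < α the left-boundary derivative
D(ε) = (q/p)(e^{(β−α)p/ε} − 1)/(1 − e^{−q/ε}) of the exact solution tends to −q/p
as ε → 0⁺, so there is no boundary layer at x = 0. -/
theorem stmt_5 (p q α β : ℝ) (hp : 0 < p) (hq : 0 < q) (hβα : β < α) :
    Tendsto (fun ε : ℝ =>
        q / p * (Real.exp ((β - α) * p / ε) - 1) / (1 - Real.exp (-q / ε)))
      (nhdsWithin 0 (Set.Ioi 0)) (nhds (-(q / p))) := by
  have hinv : Tendsto (fun ε : ℝ => ε⁻¹) (nhdsWithin 0 (Set.Ioi 0)) atTop :=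
    tendsto_inv_nhdsGT_zero
  have h1 : Tendsto (fun ε : ℝ => (β - α) * p / ε) (nhdsWithin 0 (Set.Ioi 0)) atBot := by
    have hc : (β - α) * p < 0 := mul_neg_of_neg_of_pos (by linarith) hp
    simpa [div_eq_mul_inv] using hinv.const_mul_atTop_of_neg hc
  have h2 : Tendsto (fun ε : ℝ => -q / ε) (nhdsWithin 0 (Set.Ioi 0)) atBot := by
    simpa [div_eq_mul_inv] using hinv.const_mul_atTop_of_neg (neg_neg_iff_pos.mpr hq)
  have e1 : Tendsto (fun ε : ℝ => Real.exp ((β - α) * p / ε)) (nhdsWithin 0 (Set.Ioi 0))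
      (nhds 0) := Real.tendsto_exp_atBot.comp h1
  have e2 : Tendsto (fun ε : ℝ => Real.exp (-q / ε)) (nhdsWithin 0 (Set.Ioi 0))
      (nhds 0) := Real.tendsto_exp_atBot.comp h2
  have hnum : Tendsto (fun ε : ℝ => q / p * (Real.exp ((β - α) * p / ε) - 1))
      (nhdsWithin 0 (Set.Ioi 0)) (nhds (q / p * (0 - 1))) :=
    tendsto_const_nhds.mul (e1.sub tendsto_const_nhds)
  have hden : Tendsto (fun ε : ℝ => 1 - Real.exp (-q / ε))
      (nhdsWithin 0 (Set.Ioi 0)) (nhds (1 - 0)) := tendsto_const_nhds.sub e2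
  have := hnum.div hden (by norm_num)
  convert this using 2
  norm_num
  ring
end

section
/- Let p > 0, q > 0 and α, β ∈ ℝ with β < α − q/p, and for ε > 0 set E(ε) = (q/p) · (1 − e^{(α−β)p/ε}) / (e^{q/ε} − 1) (the derivative at the right boundary of the exact solution of the hypersingular problem). Then E(ε) < 0 for all sufficiently small ε > 0 and ε · ln(−E(ε)) tends to (α − β)p − q as ε → 0⁺; in particular |E(ε)| grows like e^{((α−β)p−q)/ε}, i.e. a hypersingular boundary layer forms at x = 1. -/
open Filter

lemma aux_eps_tendsto : Tendsto (fun ε : ℝ => ε) (nhdsWithin 0 (Set.Ioi 0)) (nhds 0) :=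
  tendsto_id.mono_left nhdsWithin_le_nhds

lemma aux_lim (c : ℝ) (hc : 0 < c) :
    Tendsto (fun ε : ℝ => ε * Real.log (1 - Real.exp (-(c / ε))))
      (nhdsWithin 0 (Set.Ioi 0)) (nhds 0) := by
  have h1 : Tendsto (fun ε : ℝ => c / ε) (nhdsWithin 0 (Set.Ioi 0)) atTop := by
    simpa [div_eq_mul_inv] using (tendsto_inv_nhdsGT_zero.const_mul_atTop hc)
  have h2 : Tendsto (fun ε : ℝ => Real.exp (-(c / ε))) (nhdsWithin 0 (Set.Ioi 0)) (nhds 0) :=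
    Real.tendsto_exp_atBot.comp (tendsto_neg_atBot_iff.mpr h1)
  have h3 : Tendsto (fun ε : ℝ => 1 - Real.exp (-(c / ε))) (nhdsWithin 0 (Set.Ioi 0)) (nhds 1) := by
    simpa using tendsto_const_nhds.sub h2
  have h4 : Tendsto (fun ε : ℝ => Real.log (1 - Real.exp (-(c / ε))))
      (nhdsWithin 0 (Set.Ioi 0)) (nhds 0) := by
    have := (Real.continuousAt_log one_ne_zero).tendsto.comp h3
    simpa [Function.comp_def] using this
  simpa using aux_eps_tendsto.mul h4

/-- for β < α − q/p the right-boundary derivative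
E(ε) = (q/p)(1 − e^{(α−β)p/ε})/(e^{q/ε} − 1) of the exact solution is negative for all
sufficiently small ε > 0 and satisfies ε · ln(−E(ε)) → (α − β)p − q as ε → 0⁺,
i.e. a hypersingular boundary layer forms at x = 1. -/
theorem stmt_6 (p q α β : ℝ) (hp : 0 < p) (hq : 0 < q) (hβα : β < α - q / p) :
    (∀ᶠ ε : ℝ in nhdsWithin 0 (Set.Ioi 0),
      q / p * (1 - Real.exp ((α - β) * p / ε)) / (Real.exp (q / ε) - 1) < 0) ∧
    Tendsto (fun ε : ℝ => ε * Real.log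
        (-(q / p * (1 - Real.exp ((α - β) * p / ε)) / (Real.exp (q / ε) - 1))))
      (nhdsWithin 0 (Set.Ioi 0)) (nhds ((α - β) * p - q)) := by
  set A : ℝ := (α - β) * p with hA
  have hAq : q < A := by
    have h : q / p < α - β := by linarith
    calc q = q / p * p := by field_simp
    _ < (α - β) * p := by exact mul_lt_mul_of_pos_right h hp
  have hApos : 0 < A := hq.trans hAq
  have haux : ∀ ε : ℝ, 0 < ε →
      (q / p * (1 - Real.exp (A / ε)) / (Real.exp (q / ε) - 1) < 0) ∧
      ε * Real.log (-(q / p * (1 - Real.exp (A / ε)) / (Real.exp (q / ε) - 1)))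
        = ε * Real.log (q / p) + (A - q)
          + ε * Real.log (1 - Real.exp (-(A / ε))) - ε * Real.log (1 - Real.exp (-(q / ε))) := by
    intro ε hε
    have hexpA : (0:ℝ) < Real.exp (A / ε) - 1 := by
      have : 1 < Real.exp (A / ε) := by
        rw [Real.one_lt_exp_iff]; positivity
      linarith
    have hexpq : (0:ℝ) < Real.exp (q / ε) - 1 := by
      have : 1 < Real.exp (q / ε) := by
        rw [Real.one_lt_exp_iff]; positivity
      linarith
    have hqp : (0:ℝ) < q / p := by positivity
    constructor
    · apply div_neg_of_neg_of_pos _ hexpq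
      exact mul_neg_of_pos_of_neg hqp (by linarith)
    · have hneg : -(q / p * (1 - Real.exp (A / ε)) / (Real.exp (q / ε) - 1))
          = q / p * (Real.exp (A / ε) - 1) / (Real.exp (q / ε) - 1) := by ring
      have hsmallA : (0:ℝ) < 1 - Real.exp (-(A / ε)) := by
        have : Real.exp (-(A / ε)) < 1 := by
          rw [Real.exp_lt_one_iff]
          have : (0:ℝ) < A / ε := by positivity
          linarith
        linarith
      have hsmallq : (0:ℝ) < 1 - Real.exp (-(q / ε)) := by
        have : Real.exp (-(q / ε)) < 1 := by
          rw [Real.exp_lt_one_iff]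
          have : (0:ℝ) < q / ε := by positivity
          linarith
        linarith
      have hfactA : Real.exp (A / ε) - 1 = Real.exp (A / ε) * (1 - Real.exp (-(A / ε))) := by
        rw [mul_sub, mul_one, ← Real.exp_add]; simp
      have hfactq : Real.exp (q / ε) - 1 = Real.exp (q / ε) * (1 - Real.exp (-(q / ε))) := by
        rw [mul_sub, mul_one, ← Real.exp_add]; simp
      rw [hneg, Real.log_div (by positivity) (by positivity),
        Real.log_mul (by positivity) (by positivity), hfactA, hfactq,
        Real.log_mul (Real.exp_ne_zero _) (by positivity),
        Real.log_mul (Real.exp_ne_zero _) (by positivity),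
        Real.log_exp, Real.log_exp]
      field_simp
      ring
  constructor
  · filter_upwards [self_mem_nhdsWithin] with ε hε
    exact (haux ε hε).1
  · have heq : (fun ε : ℝ => ε * Real.log
        (-(q / p * (1 - Real.exp (A / ε)) / (Real.exp (q / ε) - 1))))
        =ᶠ[nhdsWithin 0 (Set.Ioi 0)]
        (fun ε : ℝ => ε * Real.log (q / p) + (A - q)
          + ε * Real.log (1 - Real.exp (-(A / ε))) - ε * Real.log (1 - Real.exp (-(q / ε)))) := by
      filter_upwards [self_mem_nhdsWithin] with ε hε
      exact (haux ε hε).2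
    have hlim : Tendsto (fun ε : ℝ => ε * Real.log (q / p) + (A - q)
          + ε * Real.log (1 - Real.exp (-(A / ε))) - ε * Real.log (1 - Real.exp (-(q / ε))))
        (nhdsWithin 0 (Set.Ioi 0)) (nhds (A - q)) := by
      have h0 : Tendsto (fun ε : ℝ => ε * Real.log (q / p))
          (nhdsWithin 0 (Set.Ioi 0)) (nhds 0) := by
        simpa using aux_eps_tendsto.mul_const (Real.log (q / p))
      have hc : Tendsto (fun _ : ℝ => A - q) (nhdsWithin 0 (Set.Ioi 0)) (nhds (A - q)) :=
        tendsto_const_nhds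
      have := ((h0.add hc).add (aux_lim A hApos)).sub (aux_lim q hq)
      simpa using this
    exact Tendsto.congr' heq.symm hlim
end

section
/- Let ε > 0, q > 0, let p : ℝ → ℝ be continuous, let α, β ∈ ℝ, and define P(y) = ∫₀^y exp( (1/ε) ∫₀^z p(ξ) dξ ) dz. Suppose y : [0,1] → ℝ is differentiable, y(0) = α, and P(y(x)) = (P(β) − P(α) e^{−q/ε})/(1 − e^{−q/ε}) + ((P(α) − P(β))/(1 − e^{−q/ε})) e^{−qx/ε} for all x ∈ [0,1]. Then the derivative of y at the left boundary equals y'(0) = (q/ε) · (P(β) − P(α)) / (1 − e^{−q/ε}) · exp( −(1/ε) ∫₀^α p(ξ) dξ ). -/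
/-- if y is differentiable on [0,1], y(0) = α, and
P(y(x)) = (P(β) − P(α)e^{−q/ε})/(1 − e^{−q/ε}) + ((P(α) − P(β))/(1 − e^{−q/ε})) e^{−qx/ε}
on [0,1], where P(y) = ∫₀^y exp((1/ε)∫₀^z p(ξ)dξ) dz, then the derivative at the left
boundary is y'(0) = (q/ε)(P(β) − P(α))/(1 − e^{−q/ε}) · exp(−(1/ε)∫₀^α p(ξ)dξ). -/
theorem stmt_10 (ε q α β : ℝ) (hε : 0 < ε) (hq : 0 < q)
    (p : ℝ → ℝ) (hp : Continuous p)
    (P : ℝ → ℝ)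
    (hP : ∀ w : ℝ, P w = ∫ z in (0 : ℝ)..w, Real.exp ((1 / ε) * ∫ ξ in (0 : ℝ)..z, p ξ))
    (y : ℝ → ℝ)
    (hy : DifferentiableOn ℝ y (Set.Icc (0 : ℝ) 1))
    (hy0 : y 0 = α)
    (hsol : ∀ x ∈ Set.Icc (0 : ℝ) 1,
      P (y x) = (P β - P α * Real.exp (-q / ε)) / (1 - Real.exp (-q / ε))
        + (P α - P β) / (1 - Real.exp (-q / ε)) * Real.exp (-q * x / ε)) :
    derivWithin y (Set.Icc (0 : ℝ) 1) 0
      = q / ε * (P β - P α) / (1 - Real.exp (-q / ε))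
        * Real.exp (-(1 / ε) * ∫ ξ in (0 : ℝ)..α, p ξ) := by
  have h0 : (0 : ℝ) ∈ Set.Icc (0 : ℝ) 1 := by constructor <;> norm_num
  set s := Set.Icc (0 : ℝ) 1
  set E : ℝ := Real.exp ((1 / ε) * ∫ ξ in (0 : ℝ)..α, p ξ) with hE
  have hEpos : 0 < E := Real.exp_pos _
  -- P has derivative E at α
  have hg : Continuous fun z : ℝ => Real.exp ((1 / ε) * ∫ ξ in (0 : ℝ)..z, p ξ) := by
    apply Real.continuous_exp.comp
    exact continuous_const.mul (intervalIntegral.continuous_primitive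
      (fun a b => hp.intervalIntegrable a b) 0)
  have hPd : HasDerivAt P E α := by
    have := (hg.integral_hasStrictDerivAt 0 α).hasDerivAt
    apply this.congr_of_eventuallyEq
    filter_upwards with w
    exact hP w
  -- y has derivWithin derivative at 0
  set d : ℝ := derivWithin y s 0 with hd
  have hud : UniqueDiffWithinAt ℝ s 0 := uniqueDiffOn_Icc one_pos 0 h0
  have hyd : HasDerivWithinAt y d s 0 := (hy 0 h0).hasDerivWithinAt
  -- composition
  have hcomp : HasDerivWithinAt (fun x => P (y x)) (E * d) s 0 := by
    have := HasDerivAt.comp_hasDerivWithinAt 0 (hy0 ▸ hPd) hyd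
    simpa [Function.comp_def] using this
  -- the RHS function
  set C : ℝ := (P α - P β) / (1 - Real.exp (-q / ε)) with hC
  have hrhs : HasDerivWithinAt
      (fun x : ℝ => (P β - P α * Real.exp (-q / ε)) / (1 - Real.exp (-q / ε))
        + C * Real.exp (-q * x / ε)) (C * (-q / ε)) s 0 := by
    have h1 : HasDerivAt (fun x : ℝ => Real.exp (-q * x / ε)) (-q / ε) 0 := by
      have : HasDerivAt (fun x : ℝ => -q * x / ε) (-q / ε) 0 := by
        simpa using ((hasDerivAt_id (0:ℝ)).const_mul (-q)).div_const ε
      simpa [Function.comp_def] using (Real.hasDerivAt_exp (-q * 0 / ε)).comp 0 this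
    have := ((h1.const_mul C).const_add ((P β - P α * Real.exp (-q / ε)) / (1 - Real.exp (-q / ε)))).hasDerivWithinAt (s := s)
    simpa using this
  have heq : HasDerivWithinAt (fun x => P (y x)) (C * (-q / ε)) s 0 := by
    exact hrhs.congr (fun x hx => hsol x hx) (hsol 0 h0)
  have hED : E * d = C * (-q / ε) := hud.eq_deriv _ hcomp heq
  -- solve
  have hEne : E ≠ 0 := ne_of_gt hEpos
  have hexp : Real.exp (-(1 / ε) * ∫ ξ in (0 : ℝ)..α, p ξ) = E⁻¹ := by
    rw [hE, ← Real.exp_neg]; ring_nf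
  rw [hexp]
  have : d = C * (-q / ε) / E := by
    field_simp at hED ⊢
    linarith [hED]
  rw [hd] at this ⊢
  rw [this, hC]
  have hne : (1 : ℝ) - Real.exp (-q / ε) ≠ 0 := by
    have : Real.exp (-q / ε) < 1 := by
      rw [Real.exp_lt_one_iff]
      exact div_neg_of_neg_of_pos (neg_neg_iff_pos.mpr hq) hε
    linarith
  field_simp
  ring
end

section
/- Let ε > 0 and α, β ∈ ℝ. Define W : [0,∞) → ℝ by W(z) = ε ln( (e^{β/ε} − e^{α/ε}) · (2/√π) ∫₀^{z/(2√ε)} e^{−ζ²} dζ + e^{α/ε} ). Then the argument of the logarithm is positive for all z ≥ 0, W satisfies ε W''(z) + (W'(z))² + (z/2) W'(z) = 0 for all z > 0, W(0) = α, and W(z) → β as z → ∞. -/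
open MeasureTheory Real Filter

/-- W(z) = ε ln((e^{β/ε} − e^{α/ε}) erf(z/(2√ε)) + e^{α/ε}), with
erf(ξ) = (2/√π)∫₀^ξ e^{−ζ²} dζ, is the exact solution of the self-similar problem
ε W'' + (W')² + (z/2) W' = 0, W(0) = α, W(∞) = β: the argument of the logarithm is
positive for z ≥ 0, the ODE holds for z > 0, W(0) = α and W(z) → β as z → ∞. -/
theorem stmt_14 (ε α β : ℝ) (hε : 0 < ε)
    (W : ℝ → ℝ)
    (hW : ∀ z : ℝ, W z = ε * Real.log
      ((Real.exp (β / ε) - Real.exp (α / ε))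
          * (2 / Real.sqrt Real.pi * ∫ ζ in (0 : ℝ)..(z / (2 * Real.sqrt ε)), Real.exp (-ζ ^ 2))
        + Real.exp (α / ε))) :
    (∀ z ≥ (0 : ℝ),
      0 < (Real.exp (β / ε) - Real.exp (α / ε))
          * (2 / Real.sqrt Real.pi * ∫ ζ in (0 : ℝ)..(z / (2 * Real.sqrt ε)), Real.exp (-ζ ^ 2))
        + Real.exp (α / ε)) ∧
    (∀ z > (0 : ℝ),
      ε * deriv (deriv W) z + (deriv W z) ^ 2 + z / 2 * deriv W z = 0) ∧
    W 0 = α ∧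
    Filter.Tendsto W Filter.atTop (nhds β) := by
  have hπ : 0 < Real.sqrt Real.pi := Real.sqrt_pos.mpr Real.pi_pos
  have hs : 0 < Real.sqrt ε := Real.sqrt_pos.mpr hε
  set s := Real.sqrt ε with hsdef
  have hs2 : s ^ 2 = ε := Real.sq_sqrt hε.le
  set A := Real.exp (β / ε) - Real.exp (α / ε) with hAdef
  set I : ℝ → ℝ := fun z => ∫ ζ in (0 : ℝ)..(z / (2 * s)), Real.exp (-ζ ^ 2) with hIdef
  set F : ℝ → ℝ := fun z => A * (2 / Real.sqrt Real.pi * I z) + Real.exp (α / ε) with hFdef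
  set G : ℝ → ℝ := fun z => A * (2 / Real.sqrt Real.pi * (Real.exp (-(z / (2 * s)) ^ 2) / (2 * s)))
    with hGdef
  have hcont : Continuous fun ζ : ℝ => Real.exp (-ζ ^ 2) := by continuity
  have hint : IntegrableOn (fun ζ : ℝ => Real.exp (-ζ ^ 2)) (Set.Ioi 0) := by
    have := (integrable_exp_neg_mul_sq (one_pos)).integrableOn (s := Set.Ioi (0 : ℝ))
    simpa using this
  have hgauss : ∫ ζ in Set.Ioi (0 : ℝ), Real.exp (-ζ ^ 2) = Real.sqrt Real.pi / 2 := by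
    have := integral_gaussian_Ioi 1
    simpa using this
  -- bounds on I
  have hI_nonneg : ∀ z ≥ (0 : ℝ), 0 ≤ I z := by
    intro z hz
    apply intervalIntegral.integral_nonneg
    · positivity
    · intro x _; positivity
  have hI_le : ∀ z ≥ (0 : ℝ), I z ≤ Real.sqrt Real.pi / 2 := by
    intro z hz
    rw [← hgauss]
    simp only [hIdef]
    rw [intervalIntegral.integral_of_le (by positivity)]
    apply setIntegral_mono_set hint
    · filter_upwards with x using by positivity
    · exact Filter.Eventually.of_forall (Set.Ioc_subset_Ioi_self)
  have hFpos : ∀ z ≥ (0 : ℝ), 0 < F z := by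
    intro z hz
    have h0 := hI_nonneg z hz
    have h1 := hI_le z hz
    have ht0 : 0 ≤ 2 / Real.sqrt Real.pi * I z := by positivity
    have ht1 : 2 / Real.sqrt Real.pi * I z ≤ 1 := by
      rw [div_mul_eq_mul_div, div_le_one hπ]
      nlinarith
    have hea := Real.exp_pos (α / ε)
    have heb := Real.exp_pos (β / ε)
    rcases lt_or_ge (2 / Real.sqrt Real.pi * I z) 1 with h | h
    · have hpos : 0 < Real.exp (α / ε) * (1 - 2 / Real.sqrt Real.pi * I z) := by nlinarith
      simp only [hFdef, hAdef]
      nlinarith [mul_nonneg heb.le ht0]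
    · have h2 : 2 / Real.sqrt Real.pi * I z = 1 := le_antisymm ht1 h
      simp only [hFdef, hAdef, h2]
      nlinarith
  -- derivative of I
  have hIdiff : ∀ z : ℝ, HasDerivAt I (Real.exp (-(z / (2 * s)) ^ 2) / (2 * s)) z := by
    intro z
    have h1 : HasDerivAt (fun u : ℝ => ∫ ζ in (0 : ℝ)..u, Real.exp (-ζ ^ 2))
        (Real.exp (-(z / (2 * s)) ^ 2)) (z / (2 * s)) := by
      exact intervalIntegral.integral_hasDerivAt_right
        (hcont.intervalIntegrable _ _)
        (hcont.stronglyMeasurable.stronglyMeasurableAtFilter) hcont.continuousAt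
    have h2 : HasDerivAt (fun z : ℝ => z / (2 * s)) (1 / (2 * s)) z := by
      simpa using (hasDerivAt_id z).div_const (2 * s)
    have h3 : I = (fun u : ℝ => ∫ ζ in (0 : ℝ)..u, Real.exp (-ζ ^ 2)) ∘ fun z : ℝ => z / (2 * s) :=
      rfl
    rw [h3]
    have := h1.comp z h2
    refine this.congr_deriv ?_
    rw [mul_one_div]
  have hFdiff : ∀ z : ℝ, HasDerivAt F (G z) z := by
    intro z
    exact (((hIdiff z).const_mul (2 / Real.sqrt Real.pi)).const_mul A).add_const _
  -- derivative of G
  have hGdiff : ∀ z : ℝ, HasDerivAt G (-(z / (2 * ε)) * G z) z := by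
    intro z
    have hinner : HasDerivAt (fun z : ℝ => -(z / (2 * s)) ^ 2)
        (-(2 * (z / (2 * s)) * (1 / (2 * s)))) z := by
      have h2 : HasDerivAt (fun z : ℝ => z / (2 * s)) (1 / (2 * s)) z := by
        simpa using (hasDerivAt_id z).div_const (2 * s)
      have := (h2.fun_pow 2).fun_neg
      simpa [mul_comm, mul_assoc, mul_left_comm] using this
    have hexp := hinner.exp
    have := ((hexp.div_const (2 * s)).const_mul (2 / Real.sqrt Real.pi)).const_mul A
    refine this.congr_deriv ?_
    rw [hGdef]
    have hsne : s ≠ 0 := hs.ne'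
    have hπne : Real.sqrt Real.pi ≠ 0 := hπ.ne'
    rw [← hs2]
    field_simp
  -- W as ε * log F
  have hWeq : W = fun z => ε * Real.log (F z) := funext fun z => hW z
  have hWd : ∀ z > (0 : ℝ), HasDerivAt W (ε * (G z / F z)) z := by
    intro z hz
    rw [hWeq]
    exact ((hFdiff z).log (hFpos z hz.le).ne').const_mul ε
  have hderivW : ∀ x > (0 : ℝ), deriv W x = ε * (G x / F x) := fun x hx => (hWd x hx).deriv
  refine ⟨hFpos, ?_, ?_, ?_⟩
  · -- ODE
    intro z hz
    have hFz : F z ≠ 0 := (hFpos z hz.le).ne'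
    have hev : deriv W =ᶠ[nhds z] fun x => ε * (G x / F x) := by
      filter_upwards [eventually_gt_nhds hz] with x hx using hderivW x hx
    have hdd : deriv (deriv W) z = deriv (fun x => ε * (G x / F x)) z := hev.deriv_eq
    have h2 : HasDerivAt (fun x => ε * (G x / F x))
        (ε * ((-(z / (2 * ε)) * G z * F z - G z * G z) / F z ^ 2)) z :=
      (((hGdiff z).div (hFdiff z) hFz)).const_mul ε
    rw [hdd, h2.deriv, hderivW z hz]
    have hεne : ε ≠ 0 := hε.ne'
    field_simp
    ring
  · -- W 0 = α
    rw [hW 0]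
    simp only [zero_div, intervalIntegral.integral_same, mul_zero, add_zero, zero_add,
      Real.log_exp]
    field_simp
  · -- limit
    rw [hWeq]
    have htop : Tendsto (fun z : ℝ => z / (2 * s)) atTop atTop :=
      tendsto_id.atTop_div_const (by positivity)
    have hItend : Tendsto I atTop (nhds (Real.sqrt Real.pi / 2)) := by
      rw [← hgauss]
      exact intervalIntegral_tendsto_integral_Ioi 0 hint htop
    have hFtend : Tendsto F atTop (nhds (Real.exp (β / ε))) := by
      have : Tendsto F atTop
          (nhds (A * (2 / Real.sqrt Real.pi * (Real.sqrt Real.pi / 2)) + Real.exp (α / ε))) :=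
        ((hItend.const_mul _).const_mul A).add_const _
      have h1 : 2 / Real.sqrt Real.pi * (Real.sqrt Real.pi / 2) = 1 := by
        field_simp
      rw [h1, mul_one, hAdef] at this
      simpa using this
    have hlog : Tendsto (fun z => Real.log (F z)) atTop (nhds (β / ε)) := by
      have := (Real.continuousAt_log (Real.exp_pos (β / ε)).ne').tendsto.comp hFtend
      simpa [Real.log_exp, Function.comp_def] using this
    have := hlog.const_mul ε
    have hβ : ε * (β / ε) = β := by field_simp
    rw [hβ] at this
    exact this
end
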